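/- arXiv:2506.21235 — 2 statements merged into one kernel-verified Lean document; each statement's English description precedes it below -/
import Mathlib

section
/- For every graph G without isolated vertices, there exists a Grundy double dominating sequence S of G such that the number of vertices v in S with N[v] \ ∪_{u earlier in S} N[u] ≠ ∅ is at least half the length of S. -/
open SimpleGraph

variable {V : Type*}

/-- The closed neighborhood of a vertex. -/
def cnbr (G : SimpleGraph V) (v : V) : Set V := insert v (G.neighborSet v)

/-- The number of vertices in the list `l` that dominate `u` (i.e. whose closed
neighborhood contains `u`). -/
noncomputable def domCount (G : SimpleGraph V) (u : V) (l : List V) : ℕ :=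
  {w | w ∈ l ∧ u ∈ cnbr G w}.ncard

/-- A double neighborhood sequence (DNS): a sequence of distinct vertices in which each
vertex dominates some vertex dominated at most once by its predecessors. -/
def IsDNS (G : SimpleGraph V) (l : List V) : Prop :=
  l.Nodup ∧ ∀ i : Fin l.length, ∃ u ∈ cnbr G (l.get i), domCount G u (l.take i) ≤ 1

/-- A double dominating sequence (DDS): a DNS whose underlying set is doubly dominating. -/
def IsDDS (G : SimpleGraph V) (l : List V) : Prop :=
  IsDNS G l ∧ ∀ v, 2 ≤ domCount G v l

/-- The Grundy double domination number: maximum length of a DDS. -/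
noncomputable def gddn (G : SimpleGraph V) : ℕ :=
  sSup {n | ∃ l : List V, IsDDS G l ∧ l.length = n}

/-- The maximum double neighborhood number: maximum length of a DNS. -/
noncomputable def mdnn (G : SimpleGraph V) : ℕ :=
  sSup {n | ∃ l : List V, IsDNS G l ∧ l.length = n}

/-- A legal (Grundy domination) sequence. -/
def IsLegal (G : SimpleGraph V) (l : List V) : Prop :=
  l.Nodup ∧ ∀ i : Fin l.length, ∃ u ∈ cnbr G (l.get i), domCount G u (l.take i) = 0

/-- A dominating sequence: legal sequence whose underlying set dominates. -/
def IsDomSeq (G : SimpleGraph V) (l : List V) : Prop :=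
  IsLegal G l ∧ ∀ v, 1 ≤ domCount G v l

/-- The Grundy domination number: maximum length of a dominating sequence. -/
noncomputable def grundy (G : SimpleGraph V) : ℕ :=
  sSup {n | ∃ l : List V, IsDomSeq G l ∧ l.length = n}

/-- The double domination number: minimum size of a double dominating set. -/
noncomputable def ddomNum (G : SimpleGraph V) : ℕ :=
  sInf {n | ∃ D : Set V, (∀ v, 2 ≤ {w | w ∈ D ∧ v ∈ cnbr G w}.ncard) ∧ D.ncard = n}

/-! ### Auxiliary lemmas about `cnbr` and `domCount` -/

set_option linter.unusedSectionVars false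

section Aux

lemma aux_cnbr_self (G : SimpleGraph V) (v : V) : v ∈ cnbr G v := Set.mem_insert _ _

lemma aux_cnbr_comm {G : SimpleGraph V} {u w : V} : u ∈ cnbr G w ↔ w ∈ cnbr G u := by
  simp [cnbr, neighborSet, eq_comm, G.adj_comm]

variable [Fintype V] {G : SimpleGraph V}

lemma domCount_le_of_subset {u : V} {l₁ l₂ : List V} (h : ∀ w ∈ l₁, w ∈ l₂) :
    domCount G u l₁ ≤ domCount G u l₂ := by
  classical
  apply Set.ncard_le_ncard
  · rintro w ⟨hw, hc⟩; exact ⟨h w hw, hc⟩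
  · exact Set.toFinite _

lemma domCount_eq_of_mem_iff {u : V} {l₁ l₂ : List V} (h : ∀ w, w ∈ l₁ ↔ w ∈ l₂) :
    domCount G u l₁ = domCount G u l₂ :=
  le_antisymm (domCount_le_of_subset fun w hw => (h w).1 hw)
    (domCount_le_of_subset fun w hw => (h w).2 hw)

lemma domCount_eq_zero_iff {u : V} {l : List V} :
    domCount G u l = 0 ↔ ∀ w ∈ l, u ∉ cnbr G w := by
  classical
  rw [domCount, Set.ncard_eq_zero (Set.toFinite _)]
  constructor
  · intro h w hw hc
    exact absurd (Set.eq_empty_iff_forall_notMem.mp h w) (by simp [hw, hc])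
  · intro h
    ext w; simp only [Set.mem_setOf_eq, Set.mem_empty_iff_false, iff_false, not_and]
    exact h w

lemma two_le_domCount {u w₁ w₂ : V} {l : List V} (h₁ : w₁ ∈ l) (h₂ : w₂ ∈ l)
    (hne : w₁ ≠ w₂) (d₁ : u ∈ cnbr G w₁) (d₂ : u ∈ cnbr G w₂) : 2 ≤ domCount G u l := by
  classical
  calc 2 = ({w₁, w₂} : Set V).ncard := (Set.ncard_pair hne).symm
  _ ≤ _ := Set.ncard_le_ncard (by rintro w (rfl | rfl) <;> simp_all) (Set.toFinite _)

lemma domCount_unique {u : V} {l : List V} (h : domCount G u l = 1) :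
    ∃ w ∈ l, u ∈ cnbr G w ∧ ∀ w' ∈ l, u ∈ cnbr G w' → w' = w := by
  classical
  obtain ⟨w, hw⟩ := Set.ncard_eq_one.mp h
  have hwm : w ∈ l ∧ u ∈ cnbr G w := by
    have : w ∈ {w' | w' ∈ l ∧ u ∈ cnbr G w'} := hw ▸ rfl
    exact this
  exact ⟨w, hwm.1, hwm.2, fun w' hw' hc => by
    have : w' ∈ ({w} : Set V) := hw ▸ (show w' ∈ {w'' | w'' ∈ l ∧ u ∈ cnbr G w''} from ⟨hw', hc⟩)
    exact this⟩

end Aux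

/-! ### Pure list lemmas about moving one element of a list -/

namespace MoveAux
variable {α : Type*}

lemma getElem_not_mem_take {l : List α} (hnd : l.Nodup) {n : ℕ} (h : n < l.length) :
    l[n] ∉ l.take n := by
  intro hmem
  obtain ⟨m, hm, hget⟩ := List.getElem_of_mem hmem
  have hml : m < n := by simp at hm; omega
  have hmm : m < l.length := by omega
  rw [List.getElem_take] at hget
  have := (List.Nodup.getElem_inj_iff hnd).mp hget
  omega

lemma getElem_not_mem_drop {l : List α} (hnd : l.Nodup) {n : ℕ} (h : n < l.length) :
    l[n] ∉ l.drop (n+1) := by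
  intro hmem
  obtain ⟨m, hm, hget⟩ := List.getElem_of_mem hmem
  rw [List.getElem_drop] at hget
  have := (List.Nodup.getElem_inj_iff hnd).mp hget
  omega

lemma mem_take_mono {l : List α} {m n : ℕ} (h : m ≤ n) {x : α} (hx : x ∈ l.take m) :
    x ∈ l.take n := by
  rw [show m = min m n by omega, ← List.take_take] at hx
  exact List.take_subset _ _ hx

lemma take_succ_split (l : List α) {q p : ℕ} (hq : q < l.length) (hqp : q ≤ p) :
    l.take (p+1) = l.take q ++ l[q] :: (l.drop (q+1)).take (p - q) := by
  conv_lhs => rw [show p + 1 = q + (p - q + 1) by omega, List.take_add]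
  rw [List.drop_eq_getElem_cons hq, List.take_succ_cons]

/-- Moving the element at index `j` of `l` to sit right after the element at index `i1`. -/
def moveT (l : List α) (j i1 : ℕ) (h : j < l.length) : List α :=
  l.take j ++ ((l.drop (j+1)).take (i1 - j) ++ l[j] :: l.drop (i1+1))

section
variable {l : List α} {j i1 : ℕ}

lemma moveT_perm (hj1 : j < i1) (h : j < l.length) : (moveT l j i1 h).Perm l := by
  have hsplit : l.take (i1+1) = l.take j ++ l[j] :: (l.drop (j+1)).take (i1 - j) :=
    take_succ_split l h (le_of_lt hj1)
  have hdecomp : (l.take j ++ l[j] :: (l.drop (j+1)).take (i1 - j)) ++ l.drop (i1+1) = l := by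
    rw [← hsplit]; exact List.take_append_drop _ _
  have hmid := (List.perm_middle (a := l[j]) (l₁ := (l.drop (j+1)).take (i1 - j))
    (l₂ := l.drop (i1+1))).append_left (l.take j)
  have heq : l.take j ++ (l[j] :: ((l.drop (j+1)).take (i1 - j) ++ l.drop (i1+1))) = l := by
    conv_rhs => rw [← hdecomp]
    simp [List.append_assoc]
  exact hmid.trans (List.Perm.of_eq heq)

lemma moveT_getElem?_lt (h : j < l.length) {p : ℕ} (hp : p < j) :
    (moveT l j i1 h)[p]? = l[p]? := by
  have hA : (l.take j).length = j := by simp; omega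
  rw [moveT, List.getElem?_append, hA, if_pos hp, List.getElem?_take_of_lt hp]

lemma moveT_getElem?_mid (hi1 : i1 < l.length) (h : j < l.length) {p : ℕ}
    (hpj : j ≤ p) (hp : p < i1) : (moveT l j i1 h)[p]? = l[p+1]? := by
  have hA : (l.take j).length = j := by simp; omega
  have hB : ((l.drop (j+1)).take (i1 - j)).length = i1 - j := by simp; omega
  rw [moveT, List.getElem?_append, hA, if_neg (by omega), List.getElem?_append, hB,
    if_pos (by omega), List.getElem?_take_of_lt (by omega), List.getElem?_drop]
  congr 1; omega

lemma moveT_getElem?_i1 (hj1 : j < i1) (hi1 : i1 < l.length) (h : j < l.length) :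
    (moveT l j i1 h)[i1]? = some (l[j]) := by
  have hA : (l.take j).length = j := by simp; omega
  have hB : ((l.drop (j+1)).take (i1 - j)).length = i1 - j := by simp; omega
  rw [moveT, List.getElem?_append, hA, if_neg (by omega), List.getElem?_append, hB,
    if_neg (by omega), show i1 - j - (i1 - j) = 0 by omega]
  exact List.getElem?_cons_zero

lemma moveT_getElem?_gt (hj1 : j < i1) (hi1 : i1 < l.length) (h : j < l.length) {p : ℕ}
    (hp : i1 < p) : (moveT l j i1 h)[p]? = l[p]? := by
  have hA : (l.take j).length = j := by simp; omega
  have hB : ((l.drop (j+1)).take (i1 - j)).length = i1 - j := by simp; omega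
  rw [moveT, List.getElem?_append, hA, if_neg (by omega), List.getElem?_append, hB,
    if_neg (by omega), show p - j - (i1 - j) = (p - i1 - 1) + 1 by omega,
    List.getElem?_cons_succ, List.getElem?_drop]
  congr 1; omega

lemma moveT_take_le (h : j < l.length) {p : ℕ} (hp : p ≤ j) :
    (moveT l j i1 h).take p = l.take p := by
  have hA : (l.take j).length = j := by simp; omega
  rw [moveT, List.take_append_of_le_length (by rw [hA]; omega), List.take_take,
    min_eq_left hp]

lemma moveT_mem_take_mid (hnd : l.Nodup) (hj1 : j < i1) (hi1 : i1 < l.length)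
    (h : j < l.length) {p : ℕ} (hpj : j ≤ p) (hp : p ≤ i1) (x : α) :
    x ∈ (moveT l j i1 h).take p ↔ (x ∈ l.take (p+1) ∧ x ≠ l[j]) := by
  have hA : (l.take j).length = j := by simp; omega
  have hB : ((l.drop (j+1)).take (i1 - j)).length = i1 - j := by simp; omega
  have h1 : (moveT l j i1 h).take p = l.take j ++ (l.drop (j+1)).take (p - j) := by
    rw [moveT, List.take_append,
      List.take_of_length_le (l := l.take j) (i := p) (by rw [hA]; omega),
      hA, List.take_append_of_le_length (by rw [hB]; omega), List.take_take,
      min_eq_left (by omega)]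
  have h2 : l.take (p+1) = l.take j ++ l[j] :: (l.drop (j+1)).take (p - j) :=
    take_succ_split l h hpj
  have hvjA : l[j] ∉ l.take j := getElem_not_mem_take hnd h
  have hvjD : l[j] ∉ (l.drop (j+1)).take (p - j) :=
    fun hx => getElem_not_mem_drop hnd h (List.take_subset _ _ hx)
  rw [h1, h2]
  simp only [List.mem_append, List.mem_cons]
  constructor
  · rintro (hx | hx)
    · exact ⟨Or.inl hx, fun he => hvjA (he ▸ hx)⟩
    · exact ⟨Or.inr (Or.inr hx), fun he => hvjD (he ▸ hx)⟩
  · rintro ⟨(hx | hx | hx), hne⟩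
    · exact Or.inl hx
    · exact absurd hx hne
    · exact Or.inr hx

lemma moveT_mem_take_gt (hj1 : j < i1) (hi1 : i1 < l.length) (h : j < l.length) {p : ℕ}
    (hp : i1 < p) (x : α) :
    x ∈ (moveT l j i1 h).take p ↔ x ∈ l.take p := by
  have hA : (l.take j).length = j := by simp; omega
  have hB : ((l.drop (j+1)).take (i1 - j)).length = i1 - j := by simp; omega
  have h1 : (moveT l j i1 h).take p
      = l.take j ++ ((l.drop (j+1)).take (i1 - j) ++ l[j] :: (l.drop (i1+1)).take (p - i1 - 1)) := by
    rw [moveT, List.take_append,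
      List.take_of_length_le (l := l.take j) (i := p) (by rw [hA]; omega), hA,
      List.take_append,
      List.take_of_length_le (l := (l.drop (j+1)).take (i1 - j)) (i := p - j) (by rw [hB]; omega),
      hB, show p - j - (i1 - j) = (p - i1 - 1) + 1 by omega, List.take_succ_cons]
  have h2 : l.take p = (l.take j ++ l[j] :: (l.drop (j+1)).take (i1 - j))
      ++ (l.drop (i1+1)).take (p - (i1+1)) := by
    conv_lhs => rw [show p = (i1 + 1) + (p - (i1+1)) by omega, List.take_add]
    rw [take_succ_split l h (le_of_lt hj1)]
  rw [h1, h2]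
  have h3 : p - (i1+1) = p - i1 - 1 := by omega
  rw [h3]
  simp only [List.mem_append, List.mem_cons]
  tauto

end
end MoveAux

/-- The number of sequence positions having a private (not previously dominated) neighbor. -/
noncomputable def card1 (G : SimpleGraph V) (l : List V) : ℕ :=
  ({i : Fin l.length | ∃ u ∈ cnbr G (l.get i), domCount G u (l.take i) = 0} :
    Set (Fin l.length)).ncard

lemma ncard_lt_of_inj_insert {α β : Type*} [Finite α] [Finite β] {s : Set α} {t : Set β}
    {a : α} (ha : a ∉ s) (f : α → β) (hf : Function.Injective f)
    (h : ∀ x ∈ insert a s, f x ∈ t) : s.ncard < t.ncard := by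
  have h1 : (insert a s).ncard ≤ t.ncard := by
    rw [← Set.ncard_image_of_injective _ hf]
    exact Set.ncard_le_ncard (by rintro y ⟨x, hx, rfl⟩; exact h x hx) (Set.toFinite _)
  rw [Set.ncard_insert_of_notMem ha (Set.toFinite _)] at h1
  omega

section Exchange

variable [Fintype V] {G : SimpleGraph V}

/-- The key exchange lemma: if the `j`-th vertex of a DNS privately dominates witnesses of
two later positions `i1 < i2` that have no private neighbor, then moving the `j`-th vertex
right behind position `i1` yields a DNS on the same vertex set with strictly more positions
having a private neighbor. -/
lemma exchange {l : List V} (hnd : l.Nodup)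
    (hleg : ∀ i : Fin l.length, ∃ u ∈ cnbr G (l.get i), domCount G u (l.take i) ≤ 1)
    {j i1 i2 : ℕ} (hj1 : j < i1) (h12 : i1 < i2) (hi2 : i2 < l.length)
    {u1 u2 : V}
    (hu1i : u1 ∈ cnbr G (l[i1]'(by omega)))
    (hu1uniq : ∀ w ∈ l.take i1, u1 ∈ cnbr G w → w = l[j]'(by omega))
    (hu2j : u2 ∈ cnbr G (l[j]'(by omega)))
    (hu2uniq : ∀ w ∈ l.take i2, u2 ∈ cnbr G w → w = l[j]'(by omega))
    (hi1S : ¬ ∃ u ∈ cnbr G (l[i1]'(by omega)), domCount G u (l.take i1) = 0) :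
    ∃ T : List V, T.Perm l ∧
      (∀ i : Fin T.length, ∃ u ∈ cnbr G (T.get i), domCount G u (T.take i) ≤ 1) ∧
      card1 G l < card1 G T := by
  classical
  have hjl : j < l.length := by omega
  have hi1l : i1 < l.length := by omega
  set T := MoveAux.moveT l j i1 hjl with hT
  have hperm : T.Perm l := MoveAux.moveT_perm hj1 hjl
  have hTlen : T.length = l.length := hperm.length_eq
  have hgetget : ∀ {p q : ℕ} (hp : p < T.length) (hq : q < l.length),
      T[p]? = l[q]? → T[p]'hp = l[q]'hq := by
    intro p q hp hq hpq
    rw [List.getElem?_eq_getElem hp, List.getElem?_eq_getElem hq] at hpq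
    exact Option.some.inj hpq
  have hleg' : ∀ (p : ℕ) (hp : p < l.length),
      ∃ u ∈ cnbr G (l[p]'hp), domCount G u (l.take p) ≤ 1 := by
    intro p hp
    simpa [List.get_eq_getElem] using hleg ⟨p, hp⟩
  have hget_lt : ∀ (p : ℕ) (hpj : p < j) (hp : p < T.length), T[p]'hp = l[p]'(by omega) :=
    fun p hpj hp => hgetget hp (by omega) (MoveAux.moveT_getElem?_lt hjl hpj)
  have hget_mid : ∀ (p : ℕ) (hpj : j ≤ p) (hpi : p < i1) (hp : p < T.length),
      T[p]'hp = l[p+1]'(by omega) :=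
    fun p hpj hpi hp => hgetget hp (by omega) (MoveAux.moveT_getElem?_mid hi1l hjl hpj hpi)
  have hget_i1 : ∀ (hp : i1 < T.length), T[i1]'hp = l[j]'hjl :=
    fun hp => hgetget hp hjl
      ((MoveAux.moveT_getElem?_i1 hj1 hi1l hjl).trans (List.getElem?_eq_getElem hjl).symm)
  have hget_gt : ∀ (p : ℕ) (hpi : i1 < p) (hp : p < T.length), T[p]'hp = l[p]'(by omega) :=
    fun p hpi hp => hgetget hp (by omega) (MoveAux.moveT_getElem?_gt hj1 hi1l hjl hpi)
  have hcount_i1 : domCount G u2 (T.take i1) = 0 := by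
    rw [domCount_eq_zero_iff]
    intro w hw hcn
    obtain ⟨hw1, hw2⟩ :=
      (MoveAux.moveT_mem_take_mid hnd hj1 hi1l hjl (le_of_lt hj1) le_rfl w).1 hw
    exact hw2 (hu2uniq w (MoveAux.mem_take_mono (by omega) hw1) hcn)
  have hcount_i1m : domCount G u1 (T.take (i1 - 1)) = 0 := by
    rw [domCount_eq_zero_iff]
    intro w hw hcn
    obtain ⟨hw1, hw2⟩ :=
      (MoveAux.moveT_mem_take_mid hnd hj1 hi1l hjl (by omega) (by omega) w).1 hw
    have hw1' : w ∈ l.take i1 := by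
      rw [show i1 - 1 + 1 = i1 by omega] at hw1; exact hw1
    exact hw2 (hu1uniq w hw1' hcn)
  refine ⟨T, hperm, ?_, ?_⟩
  · -- legality of T
    intro i
    have hik : (i : ℕ) < l.length := hTlen ▸ i.isLt
    simp only [List.get_eq_getElem]
    rcases Nat.lt_or_ge (i : ℕ) j with hc1 | hc1
    · obtain ⟨u, hu, hcnt⟩ := hleg' i hik
      refine ⟨u, ?_, ?_⟩
      · rw [hget_lt (i : ℕ) hc1 i.isLt]; exact hu
      · have htk := MoveAux.moveT_take_le (l := l) (i1 := i1) hjl (le_of_lt hc1)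
        rw [← hT] at htk
        rw [htk]; exact hcnt
    · rcases Nat.lt_or_ge (i : ℕ) i1 with hc2 | hc2
      · obtain ⟨u, hu, hcnt⟩ := hleg' ((i : ℕ) + 1) (by omega)
        refine ⟨u, ?_, ?_⟩
        · rw [hget_mid (i : ℕ) hc1 hc2 i.isLt]; exact hu
        · refine le_trans (domCount_le_of_subset ?_) hcnt
          intro w hw
          exact ((MoveAux.moveT_mem_take_mid hnd hj1 hi1l hjl hc1 (le_of_lt hc2) w).1 hw).1
      · rcases Nat.lt_or_ge i1 (i : ℕ) with hc3 | hc3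
        · obtain ⟨u, hu, hcnt⟩ := hleg' (i : ℕ) hik
          refine ⟨u, ?_, ?_⟩
          · rw [hget_gt (i : ℕ) hc3 i.isLt]; exact hu
          · rw [domCount_eq_of_mem_iff
              (fun w => MoveAux.moveT_mem_take_gt hj1 hi1l hjl hc3 w)]
            exact hcnt
        · have hii : (i : ℕ) = i1 := by omega
          refine ⟨u2, ?_, ?_⟩
          · simp only [hii]
            rw [hget_i1 (by omega)]
            exact hu2j
          · rw [hii, hcount_i1]
            omega
  · -- the count increases
    show card1 G l < card1 G T
    have hi1not : (⟨i1, hi1l⟩ : Fin l.length) ∉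
        {i : Fin l.length | ∃ u ∈ cnbr G (l.get i), domCount G u (l.take i) = 0} := by
      simpa [List.get_eq_getElem] using hi1S
    have hφbound : ∀ m : Fin l.length,
        (if (m : ℕ) < j then (m : ℕ) else if (m : ℕ) = j then i1
          else if (m : ℕ) ≤ i1 then (m : ℕ) - 1 else (m : ℕ)) < T.length := by
      intro m
      have := m.isLt
      rw [hTlen]
      split_ifs <;> omega
    set φ : Fin l.length → Fin T.length := fun m =>
      ⟨if (m : ℕ) < j then (m : ℕ) else if (m : ℕ) = j then i1
        else if (m : ℕ) ≤ i1 then (m : ℕ) - 1 else (m : ℕ), hφbound m⟩ with hφ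
    have hφinj : Function.Injective φ := by
      intro a b hab
      have h := congrArg (Fin.val) hab
      simp only [hφ] at h
      have ha := a.isLt
      have hb := b.isLt
      apply Fin.ext
      split_ifs at h <;> omega
    refine ncard_lt_of_inj_insert hi1not φ hφinj ?_
    intro m hm
    simp only [Set.mem_insert_iff] at hm
    simp only [Set.mem_setOf_eq, List.get_eq_getElem]
    rcases hm with rfl | hmS
    · -- the new private position: old i1 moves to i1 - 1
      simp only [hφ, Fin.val_mk, if_neg (show ¬ (i1 < j) by omega),
        if_neg (show ¬ (i1 = j) by omega), if_pos (show i1 ≤ i1 from le_rfl)]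
      refine ⟨u1, ?_, ?_⟩
      · have hgm := hget_mid (i1 - 1) (by omega) (by omega) (by omega)
        simp only [show i1 - 1 + 1 = i1 from by omega] at hgm
        rw [hgm]
        exact hu1i
      · exact hcount_i1m
    · obtain ⟨u, hu, hcnt⟩ := hmS
      rw [List.get_eq_getElem] at hu
      rcases Nat.lt_or_ge (m : ℕ) j with hc1 | hc1
      · simp only [hφ, if_pos hc1]
        refine ⟨u, ?_, ?_⟩
        · rw [hget_lt (m : ℕ) hc1 (by omega)]; exact hu
        · have htk := MoveAux.moveT_take_le (l := l) (i1 := i1) hjl (le_of_lt hc1)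
          rw [← hT] at htk
          rw [htk]; exact hcnt
      · rcases Nat.eq_or_lt_of_le hc1 with hc2 | hc2
        · -- m = j : goes to position i1, private neighbor u2
          simp only [hφ, if_neg (show ¬ ((m : ℕ) < j) by omega),
            if_pos (show (m : ℕ) = j by omega)]
          refine ⟨u2, ?_, ?_⟩
          · rw [hget_i1 (by omega)]; exact hu2j
          · exact hcount_i1
        · have hmne : (m : ℕ) ≠ i1 := by
            intro h
            refine hi1not ?_
            have hmeq : (⟨i1, hi1l⟩ : Fin l.length) = m := Fin.ext (by simp only [Fin.val_mk]; omega)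
            rw [hmeq]
            exact ⟨u, by rw [List.get_eq_getElem]; exact hu, hcnt⟩
          rcases Nat.lt_or_ge (m : ℕ) i1 with hc3 | hc3
          · -- j < m < i1 : moves to m - 1
            simp only [hφ, if_neg (show ¬ ((m : ℕ) < j) by omega),
              if_neg (show ¬ ((m : ℕ) = j) by omega), if_pos (show (m : ℕ) ≤ i1 by omega)]
            refine ⟨u, ?_, ?_⟩
            · have hgm := hget_mid ((m : ℕ) - 1) (by omega) (by omega) (by omega)
              simp only [show (m : ℕ) - 1 + 1 = (m : ℕ) from by omega] at hgm
              rw [hgm]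
              exact hu
            · have hsub : domCount G u (T.take ((m : ℕ) - 1))
                  ≤ domCount G u (l.take (m : ℕ)) := by
                refine domCount_le_of_subset ?_
                intro w hw
                have hww := ((MoveAux.moveT_mem_take_mid hnd hj1 hi1l hjl (by omega)
                  (by omega) w).1 hw).1
                rw [show (m : ℕ) - 1 + 1 = (m : ℕ) by omega] at hww
                exact hww
              omega
          · -- m > i1 : stays at m
            have hc4 : i1 < (m : ℕ) := by omega
            simp only [hφ, if_neg (show ¬ ((m : ℕ) < j) by omega),
              if_neg (show ¬ ((m : ℕ) = j) by omega), if_neg (show ¬ ((m : ℕ) ≤ i1) by omega)]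
            refine ⟨u, ?_, ?_⟩
            · rw [hget_gt (m : ℕ) hc4 (by omega)]; exact hu
            · rw [domCount_eq_of_mem_iff
                (fun w => MoveAux.moveT_mem_take_gt hj1 hi1l hjl hc4 w)]
              exact hcnt

end Exchange

/-! ### Existence of double dominating sequences -/

section Existence

variable [Fintype V] {G : SimpleGraph V}

lemma isDNS_append {l : List V} (hl : IsDNS G l) {w v : V} (hw : w ∉ l)
    (hv : v ∈ cnbr G w) (hc : domCount G v l ≤ 1) : IsDNS G (l ++ [w]) := by
  classical
  constructor
  · rw [List.nodup_append]
    exact ⟨hl.1, List.nodup_singleton w, by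
      intro a ha b hb hab; simp at hb; subst hb; subst hab; exact hw ha⟩
  · intro i
    have hi := i.isLt
    simp only [List.length_append, List.length_singleton] at hi
    simp only [List.get_eq_getElem]
    rcases Nat.lt_or_ge (i : ℕ) l.length with hlt | hge
    · obtain ⟨u, hu, hcnt⟩ := hl.2 ⟨(i : ℕ), hlt⟩
      rw [List.get_eq_getElem] at hu
      refine ⟨u, ?_, ?_⟩
      · rw [List.getElem_append_left hlt]; exact hu
      · rw [List.take_append_of_le_length (by omega)]
        exact hcnt
    · have hieq : (i : ℕ) = l.length := by omega
      refine ⟨v, ?_, ?_⟩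
      · have hg : (l ++ [w])[(i : ℕ)]'i.isLt = w := by
          simp only [hieq]
          rw [List.getElem_append_right (le_refl l.length)]
          simp
        rw [hg]; exact hv
      · rw [hieq, List.take_left]
        exact hc

lemma exists_isDDS (G : SimpleGraph V) (hiso : ∀ v : V, ∃ u, G.Adj v u) :
    ∃ l : List V, IsDDS G l ∧ ∀ l' : List V, IsDNS G l' → l'.length ≤ l.length := by
  classical
  have hbdd : BddAbove {n | ∃ l : List V, IsDNS G l ∧ l.length = n} := by
    refine ⟨Fintype.card V, ?_⟩
    rintro n ⟨l, hl, rfl⟩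
    exact List.Nodup.length_le_card hl.1
  have hne : {n | ∃ l : List V, IsDNS G l ∧ l.length = n}.Nonempty :=
    ⟨0, [], ⟨List.nodup_nil, fun i => (Nat.not_lt_zero _ i.isLt).elim⟩, rfl⟩
  obtain ⟨l, hl, hlen⟩ := Nat.sSup_mem hne hbdd
  have hmax : ∀ l' : List V, IsDNS G l' → l'.length ≤ l.length := by
    intro l' hl'
    rw [hlen]
    exact le_csSup hbdd ⟨l', hl', rfl⟩
  refine ⟨l, ⟨hl, ?_⟩, hmax⟩
  intro v
  by_contra hcon
  push_neg at hcon
  have hc1 : domCount G v l ≤ 1 := by omega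
  obtain ⟨u, hadj⟩ := hiso v
  have hvne : v ≠ u := G.ne_of_adj hadj
  have hvv : v ∈ cnbr G v := aux_cnbr_self G v
  have hucn : u ∈ cnbr G v := Set.mem_insert_iff.mpr (Or.inr hadj)
  have hvu : v ∈ cnbr G u := aux_cnbr_comm.mp hucn
  have hex : ∃ w ∈ cnbr G v, w ∉ l := by
    by_contra hno
    push_neg at hno
    have h2 := two_le_domCount (hno v hvv) (hno u hucn) hvne hvv hvu
    omega
  obtain ⟨w, hwv, hwl⟩ := hex
  have := hmax _ (isDNS_append hl hwl (aux_cnbr_comm.mp hwv) hc1)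
  simp at this

end Existence

/-- there is a Grundy double dominating sequence in which at least half the
vertices have a private (not previously dominated) neighbor at their turn. -/
theorem stmt4 [Fintype V] (G : SimpleGraph V)
    (hiso : ∀ v : V, ∃ u, G.Adj v u) :
    ∃ l : List V, IsDDS G l ∧ l.length = gddn G ∧
      l.length ≤ 2 * ({i : Fin l.length |
        ∃ u ∈ cnbr G (l.get i), domCount G u (l.take i) = 0} : Set (Fin l.length)).ncard := by
  classical
  obtain ⟨l₀, hl₀, _⟩ := exists_isDDS G hiso
  have hbdd : BddAbove {n | ∃ l : List V, IsDDS G l ∧ l.length = n} := by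
    refine ⟨Fintype.card V, ?_⟩
    rintro n ⟨l, hl, rfl⟩
    exact List.Nodup.length_le_card hl.1.1
  obtain ⟨l₁, hl₁, hlen₁⟩ := Nat.sSup_mem
    (⟨l₀.length, l₀, hl₀, rfl⟩ : {n | ∃ l : List V, IsDDS G l ∧ l.length = n}.Nonempty) hbdd
  have hMbdd : BddAbove {n | ∃ l : List V, IsDDS G l ∧ l.length = gddn G ∧ card1 G l = n} := by
    refine ⟨Fintype.card V, ?_⟩
    rintro n ⟨l, hl, hlen, rfl⟩
    refine le_trans (le_trans (Set.ncard_le_ncard (Set.subset_univ _) (Set.toFinite _))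
      (le_of_eq ?_)) (List.Nodup.length_le_card hl.1.1)
    simp [Set.ncard_univ]
  obtain ⟨l, hlDDS, hlen, hcard⟩ :=
    Nat.sSup_mem (⟨card1 G l₁, l₁, hl₁, hlen₁, rfl⟩ :
      {n | ∃ l : List V, IsDDS G l ∧ l.length = gddn G ∧ card1 G l = n}.Nonempty) hMbdd
  have hmaxcard : ∀ l' : List V, IsDDS G l' → l'.length = gddn G → card1 G l' ≤ card1 G l := by
    intro l' h1 h2
    have := le_csSup hMbdd (⟨l', h1, h2, rfl⟩ :
      card1 G l' ∈ {n | ∃ l : List V, IsDDS G l ∧ l.length = gddn G ∧ card1 G l = n})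
    omega
  refine ⟨l, hlDDS, hlen, ?_⟩
  by_contra hcon
  push_neg at hcon
  set S1 := ({i : Fin l.length |
    ∃ u ∈ cnbr G (l.get i), domCount G u (l.take i) = 0} : Set (Fin l.length)) with hS1
  have hcompl : S1.ncard + S1ᶜ.ncard = l.length := by
    rw [Set.ncard_add_ncard_compl]; simp
  have hkey : ∀ i : Fin l.length, i ∉ S1 → ∃ jf : Fin l.length, jf ∈ S1 ∧ (jf : ℕ) < (i : ℕ) ∧
      ∃ u, u ∈ cnbr G (l.get i) ∧ u ∈ cnbr G (l.get jf) ∧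
        (∀ w ∈ l.take (i : ℕ), u ∈ cnbr G w → w = l.get jf) := by
    intro i hi
    obtain ⟨u, hu, hcnt⟩ := hlDDS.1.2 i
    have hne0 : domCount G u (l.take (i : ℕ)) ≠ 0 := by
      intro h0
      exact hi (by rw [hS1]; exact ⟨u, hu, h0⟩)
    have hcnt1 : domCount G u (l.take (i : ℕ)) = 1 := by omega
    obtain ⟨w, hwmem, hwc, hwuniq⟩ := domCount_unique hcnt1
    obtain ⟨m, hm, hget⟩ := List.getElem_of_mem hwmem
    have hmi : m < (i : ℕ) := by simp at hm; omega
    have hml : m < l.length := by omega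
    rw [List.getElem_take] at hget
    have hgetm : l.get ⟨m, hml⟩ = w := by rw [List.get_eq_getElem]; exact hget
    refine ⟨⟨m, hml⟩, ?_, hmi, u, hu, ?_, ?_⟩
    · rw [hS1]
      refine ⟨u, ?_, ?_⟩
      · rw [hgetm]; exact hwc
      · rw [domCount_eq_zero_iff]
        intro w' hw' hcn
        have hw'i : w' ∈ l.take (i : ℕ) := MoveAux.mem_take_mono (le_of_lt hmi) hw'
        have hww : w' = w := hwuniq w' hw'i hcn
        rw [hww, ← hget] at hw'
        exact MoveAux.getElem_not_mem_take hlDDS.1.1 hml hw'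
    · rw [hgetm]; exact hwc
    · intro w' hw' hcn
      rw [hgetm]
      exact hwuniq w' hw' hcn
  choose jf hjfS hjflt uf huf1 hufj huf2 using hkey
  have hlt2 : S1.ncard < S1ᶜ.ncard := by omega
  have hcards : (Set.toFinite S1).toFinset.card < (Set.toFinite S1ᶜ).toFinset.card := by
    rw [← Set.ncard_eq_toFinset_card, ← Set.ncard_eq_toFinset_card]
    exact hlt2
  have hmaps : ∀ a ∈ (Set.toFinite S1ᶜ).toFinset,
      (fun i => if h : i ∈ S1 then i else jf i h) a ∈ (Set.toFinite S1).toFinset := by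
    intro a ha
    rw [Set.Finite.mem_toFinset] at ha ⊢
    have ha' : a ∉ S1 := ha
    simp only [dif_neg ha']
    exact hjfS a ha'
  obtain ⟨x, hx, y, hy, hxy, hfxy⟩ :=
    Finset.exists_ne_map_eq_of_card_lt_of_maps_to hcards hmaps
  rw [Set.Finite.mem_toFinset] at hx hy
  have hx' : x ∉ S1 := hx
  have hy' : y ∉ S1 := hy
  have hjeq : jf x hx' = jf y hy' := by
    simpa only [dif_neg hx', dif_neg hy'] using hfxy
  have main : ∀ (a b : Fin l.length) (ha : a ∉ S1) (hb : b ∉ S1), (a : ℕ) < (b : ℕ) →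
      jf a ha = jf b hb → False := by
    intro a b ha hb hab hjab
    have hjlta : ((jf a ha : Fin l.length) : ℕ) < (a : ℕ) := hjflt a ha
    have h1 : (uf a ha) ∈ cnbr G (l[(a : ℕ)]'a.isLt) := by
      have := huf1 a ha; rwa [List.get_eq_getElem] at this
    have h2 : ∀ w ∈ l.take (a : ℕ), uf a ha ∈ cnbr G w →
        w = l[((jf a ha : Fin l.length) : ℕ)]'((jf a ha).isLt) := by
      intro w hw hc
      have := huf2 a ha w hw hc
      rwa [List.get_eq_getElem] at this
    have h3 : uf b hb ∈ cnbr G (l[((jf a ha : Fin l.length) : ℕ)]'((jf a ha).isLt)) := by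
      have := hufj b hb
      rw [← hjab] at this
      rwa [List.get_eq_getElem] at this
    have h4 : ∀ w ∈ l.take (b : ℕ), uf b hb ∈ cnbr G w →
        w = l[((jf a ha : Fin l.length) : ℕ)]'((jf a ha).isLt) := by
      intro w hw hc
      have := huf2 b hb w hw hc
      rw [← hjab] at this
      rwa [List.get_eq_getElem] at this
    have h5 : ¬ ∃ u ∈ cnbr G (l[(a : ℕ)]'a.isLt), domCount G u (l.take (a : ℕ)) = 0 := by
      rintro ⟨u, hu1, hu2⟩
      refine ha ?_
      rw [hS1]
      exact ⟨u, by rw [List.get_eq_getElem]; exact hu1, hu2⟩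
    obtain ⟨T, hTperm, hTleg, hTcard⟩ :=
      exchange hlDDS.1.1 hlDDS.1.2 hjlta hab b.isLt h1 h2 h3 h4 h5
    have hTDDS : IsDDS G T := by
      refine ⟨⟨hTperm.nodup_iff.mpr hlDDS.1.1, hTleg⟩, fun v => ?_⟩
      rw [domCount_eq_of_mem_iff (fun w => hTperm.mem_iff)]
      exact hlDDS.2 v
    have hTlen : T.length = gddn G := by rw [hTperm.length_eq, hlen]
    have := hmaxcard T hTDDS hTlen
    have hc1l : card1 G l < card1 G T := hTcard
    omega
  rcases Nat.lt_or_ge (x : ℕ) (y : ℕ) with hxy2 | hxy2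
  · exact main x y hx' hy' hxy2 hjeq
  · have hne : (x : ℕ) ≠ (y : ℕ) := fun h => hxy (Fin.ext h)
    exact main y x hy' hx' (by omega) hjeq.symm
end

section
/- Let G be a graph with at least one edge and let p be a pendant vertex of G with unique neighbor v. Then both p and v belong to the underlying set of every maximum double neighborhood sequence of G, and there exists a maximum double neighborhood sequence of G whose last two vertices are v followed by p. -/
open SimpleGraph

variable {V : Type*}

lemma mem_cnbr {G : SimpleGraph V} {u w : V} : u ∈ cnbr G w ↔ u = w ∨ G.Adj w u := by
  simp [cnbr]

lemma domCount_mono (G : SimpleGraph V) (u : V) {l m : List V}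
    (h : ∀ a ∈ l, a ∈ m) : domCount G u l ≤ domCount G u m := by
  apply Set.ncard_le_ncard
  · rintro w ⟨hw, hc⟩; exact ⟨h w hw, hc⟩
  · exact (m.finite_toSet).subset (fun w hw => hw.1)

lemma domCount_le_one (G : SimpleGraph V) (u x : V) {l : List V}
    (h : ∀ w ∈ l, u ∈ cnbr G w → w = x) : domCount G u l ≤ 1 := by
  have hsub : {w | w ∈ l ∧ u ∈ cnbr G w} ⊆ {x} := by
    rintro w ⟨hw, hc⟩; exact h w hw hc
  calc domCount G u l ≤ ({x} : Set V).ncard :=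
        Set.ncard_le_ncard hsub (Set.finite_singleton x)
    _ = 1 := Set.ncard_singleton x

/-- shifted DNS condition -/
def DNSCond (G : SimpleGraph V) (c l : List V) : Prop :=
  ∀ i, (hi : i < l.length) → ∃ u ∈ cnbr G l[i], domCount G u (c ++ l.take i) ≤ 1

lemma dnscond_cons {G : SimpleGraph V} {c : List V} {a : V} {l : List V} :
    DNSCond G c (a :: l) ↔
      (∃ u ∈ cnbr G a, domCount G u c ≤ 1) ∧ DNSCond G (c ++ [a]) l := by
  constructor
  · intro h
    refine ⟨by simpa using h 0 (Nat.succ_pos _), fun i hi => ?_⟩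
    obtain ⟨u, hu, hcu⟩ := h (i + 1) (by simpa using Nat.succ_lt_succ hi)
    rw [List.take_succ_cons, List.append_cons] at hcu
    exact ⟨u, hu, hcu⟩
  · rintro ⟨h0, h⟩ i hi
    cases i with
    | zero => simpa using h0
    | succ i =>
      obtain ⟨u, hu, hcu⟩ := h i (by simpa using Nat.lt_of_succ_lt_succ hi)
      rw [← List.append_cons] at hcu
      exact ⟨u, hu, hcu⟩

lemma dnscond_sublist {G : SimpleGraph V} {l' l : List V} (hs : List.Sublist l' l) :
    ∀ c, DNSCond G c l → DNSCond G c l' := by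
  induction hs with
  | slnil => intro c h; exact h
  | cons a hs ih =>
    intro c h
    have h' := (dnscond_cons.mp h).2
    have h'' := ih (c ++ [a]) h'
    intro i hi
    obtain ⟨u, hu, hcu⟩ := h'' i hi
    refine ⟨u, hu, le_trans (domCount_mono G u ?_) hcu⟩
    intro b hb
    simp only [List.mem_append] at hb ⊢
    rcases hb with hb | hb
    · exact Or.inl (by simp [hb])
    · exact Or.inr hb
  | cons_cons a hs ih =>
    intro c h
    rw [dnscond_cons] at h ⊢
    exact ⟨h.1, ih _ h.2⟩

lemma isDNS_iff_dnscond {G : SimpleGraph V} {l : List V} :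
    IsDNS G l ↔ l.Nodup ∧ DNSCond G [] l := by
  unfold IsDNS DNSCond
  refine and_congr_right fun _ => ?_
  constructor
  · intro h i hi; simpa using h ⟨i, hi⟩
  · intro h i; simpa using h i i.2

lemma isDNS_sublist {G : SimpleGraph V} {l' l : List V} (hs : List.Sublist l' l)
    (h : IsDNS G l) : IsDNS G l' := by
  rw [isDNS_iff_dnscond] at h ⊢
  exact ⟨h.1.sublist hs, dnscond_sublist hs [] h.2⟩

lemma isDNS_append_s7 {G : SimpleGraph V} {l : List V} {x : V} (h : IsDNS G l)
    (hx : x ∉ l) (hw : ∃ u ∈ cnbr G x, domCount G u l ≤ 1) : IsDNS G (l ++ [x]) := by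
  rw [isDNS_iff_dnscond] at h ⊢
  constructor
  · simpa [List.nodup_append] using ⟨h.1, fun a ha hax => hx (hax ▸ ha)⟩
  · intro i hi
    simp only [List.length_append, List.length_singleton] at hi
    rcases Nat.lt_or_ge i l.length with h' | h'
    · obtain ⟨u, hu, hcu⟩ := h.2 i h'
      refine ⟨u, by simpa [List.getElem_append_left h'] using hu, ?_⟩
      rwa [List.take_append_of_le_length (Nat.le_of_lt h')]
    · have : i = l.length := by omega
      subst this
      obtain ⟨u, hu, hcu⟩ := hw
      refine ⟨u, by simpa [List.getElem_concat_length] using hu, ?_⟩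
      simpa [List.take_append_of_le_length (le_refl l.length), List.take_length] using hcu

/-- a pendant vertex and its neighbor belong to every MDNS, and some MDNS
ends with the neighbor followed by the pendant vertex. -/
theorem stmt7 [Fintype V] (G : SimpleGraph V) (p v : V)
    (he : ∃ a b, G.Adj a b)
    (hpv : G.Adj p v) (huniq : ∀ w, G.Adj p w → w = v) :
    (∀ l : List V, IsDNS G l → l.length = mdnn G → p ∈ l ∧ v ∈ l) ∧
    (∃ l : List V, IsDNS G l ∧ l.length = mdnn G ∧ ∃ l₀, l = l₀ ++ [v, p]) := by
  classical
  have hne : p ≠ v := hpv.ne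
  have key : ∀ w, p ∈ cnbr G w → w = p ∨ w = v := by
    intro w hw
    rcases mem_cnbr.mp hw with h | h
    · exact Or.inl h.symm
    · exact Or.inr (huniq w h.symm)
  have hSne : {n | ∃ l : List V, IsDNS G l ∧ l.length = n}.Nonempty :=
    ⟨0, [], ⟨List.nodup_nil, fun i => absurd i.2 (by simp)⟩, rfl⟩
  have hSbdd : BddAbove {n | ∃ l : List V, IsDNS G l ∧ l.length = n} :=
    ⟨Fintype.card V, by rintro n ⟨l, hl, rfl⟩; exact hl.1.length_le_card⟩
  have hmem : ∃ l : List V, IsDNS G l ∧ l.length = mdnn G := Nat.sSup_mem hSne hSbdd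
  have hub : ∀ l : List V, IsDNS G l → l.length ≤ mdnn G :=
    fun l hl => le_csSup hSbdd ⟨l, hl, rfl⟩
  have part1 : ∀ l : List V, IsDNS G l → l.length = mdnn G → p ∈ l ∧ v ∈ l := by
    intro l hl hlen
    constructor
    · by_contra hp
      have hdns : IsDNS G (l ++ [p]) := by
        refine isDNS_append_s7 hl hp ⟨p, by simp [cnbr], domCount_le_one G p v ?_⟩
        intro w hw hc
        rcases key w hc with rfl | rfl
        · exact absurd hw hp
        · rfl
      have := hub _ hdns
      simp only [List.length_append, List.length_singleton, hlen] at this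
      omega
    · by_contra hv
      have hdns : IsDNS G (l ++ [v]) := by
        refine isDNS_append_s7 hl hv
          ⟨p, mem_cnbr.mpr (Or.inr hpv.symm), domCount_le_one G p p ?_⟩
        intro w hw hc
        rcases key w hc with rfl | rfl
        · rfl
        · exact absurd hw hv
      have := hub _ hdns
      simp only [List.length_append, List.length_singleton, hlen] at this
      omega
  refine ⟨part1, ?_⟩
  obtain ⟨l, hl, hlen⟩ := hmem
  obtain ⟨hp, hv⟩ := part1 l hl hlen
  set l₁ := (l.erase p).erase v with hl₁
  have hsub : List.Sublist l₁ l :=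
    (List.erase_sublist : List.Sublist ((l.erase p).erase v) (l.erase p)).trans
      (List.erase_sublist : List.Sublist (l.erase p) l)
  have hpl₁ : p ∉ l₁ := fun h => hl.1.not_mem_erase (List.mem_of_mem_erase h)
  have hvl₁ : v ∉ l₁ := (hl.1.erase p).not_mem_erase
  have hv1 : v ∈ l.erase p := (List.mem_erase_of_ne hne.symm).mpr hv
  have hlen1 : l₁.length + 2 = l.length := by
    have h1 := List.length_erase_of_mem hp
    have h2 := List.length_erase_of_mem hv1
    rw [← hl₁] at h2
    have h3 := List.length_pos_of_mem hp
    have h4 := List.length_pos_of_mem hv1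
    omega
  have hd1 : IsDNS G l₁ := isDNS_sublist hsub hl
  have hd2 : IsDNS G (l₁ ++ [v]) := by
    refine isDNS_append_s7 hd1 hvl₁
      ⟨p, mem_cnbr.mpr (Or.inr hpv.symm), domCount_le_one G p v ?_⟩
    intro w hw hc
    rcases key w hc with rfl | rfl
    · exact absurd hw hpl₁
    · rfl
  have hd3 : IsDNS G ((l₁ ++ [v]) ++ [p]) := by
    refine isDNS_append_s7 hd2 (by simp [hpl₁, hne]) ⟨p, by simp [cnbr], domCount_le_one G p v ?_⟩
    intro w hw hc
    rcases key w hc with rfl | rfl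
    · simp [hpl₁, hne] at hw
    · rfl
  have heq : (l₁ ++ [v]) ++ [p] = l₁ ++ [v, p] := by simp
  rw [heq] at hd3
  refine ⟨l₁ ++ [v, p], hd3, ?_, l₁, rfl⟩
  simp only [List.length_append, List.length_cons, List.length_nil]
  omega
end
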